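/- Let f : ℤ² → {contact elements} be a nondegenerate discrete channel surface with circular direction '+' and let p ∈ V with ⟨p,p⟩ < 0. Then for every n ∈ ℤ there exists a subspace W of p^⊥ with dim W ≤ 4 that contains the point spheres of f(m,n) and of f(m,n+1) for every m ∈ ℤ. (Any two adjacent circular curvature lines of a discrete channel surface lie on a common sphere, called a 'face-sphere' of the discrete channel surface.) -/

import Mathlib

noncomputable section

/-- The Lie sphere geometric model: `ℝ^{4,2}`. -/
abbrev V6 : Type := Fin 6 → ℝ

/-- The symmetric bilinear form of signature `(4,2)` on `V6`. -/
def B (x y : V6) : ℝ :=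
  x 0 * y 0 + x 1 * y 1 + x 2 * y 2 + x 3 * y 3 - x 4 * y 4 - x 5 * y 5

/-- An oriented sphere: a 1-dimensional isotropic subspace. -/
def IsSphere (S : Submodule ℝ V6) : Prop :=
  Module.finrank ℝ S = 1 ∧ ∀ x ∈ S, B x x = 0

/-- A contact element: a 2-dimensional totally isotropic subspace. -/
def IsContact (W : Submodule ℝ V6) : Prop :=
  Module.finrank ℝ W = 2 ∧ ∀ x ∈ W, ∀ y ∈ W, B x y = 0

/-- A `(2,1)`-plane: 3-dim subspace on which the form is nondegenerate of signature `(2,1)`. -/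
def IsSig21 (D : Submodule ℝ V6) : Prop :=
  ∃ u v w : V6, D = Submodule.span ℝ {u, v, w} ∧
    B u u = 1 ∧ B v v = 1 ∧ B w w = -1 ∧ B u v = 0 ∧ B u w = 0 ∧ B v w = 0

/-- A Dupin cyclide: a pair of `(2,1)`-planes, the second the orthogonal complement of the first. -/
def IsDupin (D E : Submodule ℝ V6) : Prop :=
  IsSig21 D ∧ IsSig21 E ∧ ∀ x : V6, x ∈ E ↔ ∀ y ∈ D, B x y = 0

/-- Horizontal curvature sphere on the edge from `(m,n)` to `(m+1,n)`. -/
def sPlus (f : ℤ × ℤ → Submodule ℝ V6) (m n : ℤ) : Submodule ℝ V6 :=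
  f (m, n) ⊓ f (m + 1, n)

/-- Vertical curvature sphere on the edge from `(m,n)` to `(m,n+1)`. -/
def sMinus (f : ℤ × ℤ → Submodule ℝ V6) (m n : ℤ) : Submodule ℝ V6 :=
  f (m, n) ⊓ f (m, n + 1)

/-- A discrete Legendre map. -/
def IsLegendre (f : ℤ × ℤ → Submodule ℝ V6) : Prop :=
  (∀ p : ℤ × ℤ, IsContact (f p)) ∧
  (∀ m n : ℤ, Module.finrank ℝ (sPlus f m n) = 1) ∧
  (∀ m n : ℤ, Module.finrank ℝ (sMinus f m n) = 1)

/-- A face-cyclide congruence for `f`. -/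
def IsFaceCyclideCongruence (f D E : ℤ × ℤ → Submodule ℝ V6) : Prop :=
  ∀ m n : ℤ,
    IsDupin (D (m, n)) (E (m, n)) ∧
    sPlus f m n ≤ D (m, n) ∧ sPlus f m (n + 1) ≤ D (m, n) ∧
    sMinus f m n ≤ E (m, n) ∧ sMinus f (m + 1) n ≤ E (m, n)

/-- A discrete channel surface with circular direction `+`. -/
def IsChannelPlus (f : ℤ × ℤ → Submodule ℝ V6) : Prop :=
  IsLegendre f ∧
  ∃ D E : ℤ × ℤ → Submodule ℝ V6,
    IsFaceCyclideCongruence f D E ∧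
    ∀ m m' n : ℤ, D (m, n) = D (m', n) ∧ E (m, n) = E (m', n)

/-- The orthogonal complement of a point sphere complex `p`. -/
def pPerp (p : V6) : Submodule ℝ V6 where
  carrier := {x | B x p = 0}
  add_mem' := by
    intro a b ha hb
    simp only [Set.mem_setOf_eq, B, Pi.add_apply] at *
    linear_combination ha + hb
  zero_mem' := by simp [B]
  smul_mem' := by
    intro c x hx
    simp only [Set.mem_setOf_eq, B, Pi.smul_apply, smul_eq_mul] at *
    linear_combination c * hx

/-- `f` is nondegenerate: every contact element of `f` is spanned by a horizontal and a
vertical curvature sphere. -/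
def Nondeg (f : ℤ × ℤ → Submodule ℝ V6) : Prop :=
  ∀ m n : ℤ, sPlus f m n ≠ sMinus f m n ∧ sPlus f m (n + 1) ≠ sMinus f m n


set_option maxHeartbeats 1000000 in
lemma key' (w0 w1 w2 w3 w4 w5 p0 p1 p2 p3 p4 p5 a0 a1 a2 a3 a4 a5 : ℝ)
    (hww : w0*w0+w1*w1+w2*w2+w3*w3-w4*w4-w5*w5 = -1)
    (hwp : w0*p0+w1*p1+w2*p2+w3*p3-w4*p4-w5*p5 = 0)
    (hpp : p0*p0+p1*p1+p2*p2+p3*p3-p4*p4-p5*p5 < 0)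
    (haw : a0*w0+a1*w1+a2*w2+a3*w3-a4*w4-a5*w5 = 0)
    (hap : a0*p0+a1*p1+a2*p2+a3*p3-a4*p4-a5*p5 = 0)
    (haa : a0*a0+a1*a1+a2*a2+a3*a3-a4*a4-a5*a5 = 0) :
    a0 = 0 ∧ a1 = 0 ∧ a2 = 0 ∧ a3 = 0 ∧ a4 = 0 ∧ a5 = 0 := by
  have hS : w0*p0+w1*p1+w2*p2+w3*p3 = w4*p4+w5*p5 := by linarith
  have hp45 : p0^2+p1^2+p2^2+p3^2 < p4^2+p5^2 := by nlinarith [hpp]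
  have hP0 : (0:ℝ) ≤ p0^2+p1^2+p2^2+p3^2 := by positivity
  have hW0 : (0:ℝ) ≤ w0^2+w1^2+w2^2+w3^2 := by positivity
  have hcs : (w4*p4+w5*p5)^2 ≤ (w0^2+w1^2+w2^2+w3^2)*(p0^2+p1^2+p2^2+p3^2) := by
    rw [← hS]
    nlinarith [sq_nonneg (w0*p1-w1*p0), sq_nonneg (w0*p2-w2*p0), sq_nonneg (w0*p3-w3*p0),
      sq_nonneg (w1*p2-w2*p1), sq_nonneg (w1*p3-w3*p1), sq_nonneg (w2*p3-w3*p2)]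
  have hw45 : w4^2+w5^2 = (w0^2+w1^2+w2^2+w3^2)+1 := by linear_combination -hww
  have hmul : (w4^2+w5^2)*(p4^2+p5^2) = ((w0^2+w1^2+w2^2+w3^2)+1)*(p4^2+p5^2) := by rw [hw45]
  have hWsub : (0:ℝ) ≤ (w0^2+w1^2+w2^2+w3^2)*((p4^2+p5^2)-(p0^2+p1^2+p2^2+p3^2)) :=
    mul_nonneg hW0 (by linarith)
  have hd : 0 < (w4*p5-w5*p4)^2 := by nlinarith [hcs, hmul, hWsub, hp45, hP0]
  have hdne : (w4*p5-w5*p4) ≠ 0 := by intro h; rw [h] at hd; simp at hd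
  have hkey : ((w4*p5-w5*p4)*a0-(a4*p5-a5*p4)*w0-(w4*a5-w5*a4)*p0)^2 + ((w4*p5-w5*p4)*a1-(a4*p5-a5*p4)*w1-(w4*a5-w5*a4)*p1)^2 + ((w4*p5-w5*p4)*a2-(a4*p5-a5*p4)*w2-(w4*a5-w5*a4)*p2)^2 + ((w4*p5-w5*p4)*a3-(a4*p5-a5*p4)*w3-(w4*a5-w5*a4)*p3)^2
      = -((a4*p5-a5*p4)^2) + (w4*a5-w5*a4)^2*(p0*p0+p1*p1+p2*p2+p3*p3-p4*p4-p5*p5) := by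
    linear_combination ((w4*p5-w5*p4)^2)*haa + ((a4*p5-a5*p4)^2)*hww + (2*(a4*p5-a5*p4)*(w4*a5-w5*a4))*hwp
      - (2*(w4*p5-w5*p4)*(a4*p5-a5*p4))*haw - (2*(w4*p5-w5*p4)*(w4*a5-w5*a4))*hap
  have hqp : (w4*a5-w5*a4)^2*(p0*p0+p1*p1+p2*p2+p3*p3-p4*p4-p5*p5) ≤ 0 :=
    mul_nonpos_of_nonneg_of_nonpos (sq_nonneg _) (le_of_lt hpp)
  have hA2 : (a4*p5-a5*p4)^2 ≤ 0 := by linarith [sq_nonneg ((w4*p5-w5*p4)*a0-(a4*p5-a5*p4)*w0-(w4*a5-w5*a4)*p0), sq_nonneg ((w4*p5-w5*p4)*a1-(a4*p5-a5*p4)*w1-(w4*a5-w5*a4)*p1), sq_nonneg ((w4*p5-w5*p4)*a2-(a4*p5-a5*p4)*w2-(w4*a5-w5*a4)*p2), sq_nonneg ((w4*p5-w5*p4)*a3-(a4*p5-a5*p4)*w3-(w4*a5-w5*a4)*p3), hqp, hkey]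
  have hA : (a4*p5-a5*p4) = 0 := pow_eq_zero_iff two_ne_zero |>.mp (le_antisymm hA2 (sq_nonneg _))
  have hCQ0 : (0:ℝ) ≤ (w4*a5-w5*a4)^2*(p0*p0+p1*p1+p2*p2+p3*p3-p4*p4-p5*p5) := by linarith [sq_nonneg ((w4*p5-w5*p4)*a0-(a4*p5-a5*p4)*w0-(w4*a5-w5*a4)*p0), sq_nonneg ((w4*p5-w5*p4)*a1-(a4*p5-a5*p4)*w1-(w4*a5-w5*a4)*p1), sq_nonneg ((w4*p5-w5*p4)*a2-(a4*p5-a5*p4)*w2-(w4*a5-w5*a4)*p2), sq_nonneg ((w4*p5-w5*p4)*a3-(a4*p5-a5*p4)*w3-(w4*a5-w5*a4)*p3), sq_nonneg (a4*p5-a5*p4), hkey]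
  have hC2 : (w4*a5-w5*a4)^2 = 0 := by
    rcases mul_eq_zero.mp (le_antisymm hqp hCQ0) with h | h
    · exact h
    · exact absurd h (ne_of_lt hpp)
  have hC : (w4*a5-w5*a4) = 0 := pow_eq_zero_iff two_ne_zero |>.mp hC2
  have hz02 : ((w4*p5-w5*p4)*a0-(a4*p5-a5*p4)*w0-(w4*a5-w5*a4)*p0)^2 ≤ 0 := by linarith [sq_nonneg ((w4*p5-w5*p4)*a1-(a4*p5-a5*p4)*w1-(w4*a5-w5*a4)*p1), sq_nonneg ((w4*p5-w5*p4)*a2-(a4*p5-a5*p4)*w2-(w4*a5-w5*a4)*p2), sq_nonneg ((w4*p5-w5*p4)*a3-(a4*p5-a5*p4)*w3-(w4*a5-w5*a4)*p3), sq_nonneg (a4*p5-a5*p4), hqp, hkey]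
  have hz0 : ((w4*p5-w5*p4)*a0-(a4*p5-a5*p4)*w0-(w4*a5-w5*a4)*p0) = 0 := pow_eq_zero_iff two_ne_zero |>.mp (le_antisymm hz02 (sq_nonneg _))
  have ha0 : a0 = 0 := by
    have hda : (w4*p5-w5*p4) * a0 = 0 := by linear_combination hz0 + w0*hA + p0*hC
    rcases mul_eq_zero.mp hda with h | h
    · exact absurd h hdne
    · exact h
  have hz12 : ((w4*p5-w5*p4)*a1-(a4*p5-a5*p4)*w1-(w4*a5-w5*a4)*p1)^2 ≤ 0 := by linarith [sq_nonneg ((w4*p5-w5*p4)*a0-(a4*p5-a5*p4)*w0-(w4*a5-w5*a4)*p0), sq_nonneg ((w4*p5-w5*p4)*a2-(a4*p5-a5*p4)*w2-(w4*a5-w5*a4)*p2), sq_nonneg ((w4*p5-w5*p4)*a3-(a4*p5-a5*p4)*w3-(w4*a5-w5*a4)*p3), sq_nonneg (a4*p5-a5*p4), hqp, hkey]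
  have hz1 : ((w4*p5-w5*p4)*a1-(a4*p5-a5*p4)*w1-(w4*a5-w5*a4)*p1) = 0 := pow_eq_zero_iff two_ne_zero |>.mp (le_antisymm hz12 (sq_nonneg _))
  have ha1 : a1 = 0 := by
    have hda : (w4*p5-w5*p4) * a1 = 0 := by linear_combination hz1 + w1*hA + p1*hC
    rcases mul_eq_zero.mp hda with h | h
    · exact absurd h hdne
    · exact h
  have hz22 : ((w4*p5-w5*p4)*a2-(a4*p5-a5*p4)*w2-(w4*a5-w5*a4)*p2)^2 ≤ 0 := by linarith [sq_nonneg ((w4*p5-w5*p4)*a0-(a4*p5-a5*p4)*w0-(w4*a5-w5*a4)*p0), sq_nonneg ((w4*p5-w5*p4)*a1-(a4*p5-a5*p4)*w1-(w4*a5-w5*a4)*p1), sq_nonneg ((w4*p5-w5*p4)*a3-(a4*p5-a5*p4)*w3-(w4*a5-w5*a4)*p3), sq_nonneg (a4*p5-a5*p4), hqp, hkey]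
  have hz2 : ((w4*p5-w5*p4)*a2-(a4*p5-a5*p4)*w2-(w4*a5-w5*a4)*p2) = 0 := pow_eq_zero_iff two_ne_zero |>.mp (le_antisymm hz22 (sq_nonneg _))
  have ha2 : a2 = 0 := by
    have hda : (w4*p5-w5*p4) * a2 = 0 := by linear_combination hz2 + w2*hA + p2*hC
    rcases mul_eq_zero.mp hda with h | h
    · exact absurd h hdne
    · exact h
  have hz32 : ((w4*p5-w5*p4)*a3-(a4*p5-a5*p4)*w3-(w4*a5-w5*a4)*p3)^2 ≤ 0 := by linarith [sq_nonneg ((w4*p5-w5*p4)*a0-(a4*p5-a5*p4)*w0-(w4*a5-w5*a4)*p0), sq_nonneg ((w4*p5-w5*p4)*a1-(a4*p5-a5*p4)*w1-(w4*a5-w5*a4)*p1), sq_nonneg ((w4*p5-w5*p4)*a2-(a4*p5-a5*p4)*w2-(w4*a5-w5*a4)*p2), sq_nonneg (a4*p5-a5*p4), hqp, hkey]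
  have hz3 : ((w4*p5-w5*p4)*a3-(a4*p5-a5*p4)*w3-(w4*a5-w5*a4)*p3) = 0 := pow_eq_zero_iff two_ne_zero |>.mp (le_antisymm hz32 (sq_nonneg _))
  have ha3 : a3 = 0 := by
    have hda : (w4*p5-w5*p4) * a3 = 0 := by linear_combination hz3 + w3*hA + p3*hC
    rcases mul_eq_zero.mp hda with h | h
    · exact absurd h hdne
    · exact h
  have ha4 : a4 = 0 := by
    have hda : (w4*p5-w5*p4) * a4 = 0 := by linear_combination w4*hA + p4*hC
    rcases mul_eq_zero.mp hda with h | h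
    · exact absurd h hdne
    · exact h
  have ha5 : a5 = 0 := by
    have hda : (w4*p5-w5*p4) * a5 = 0 := by linear_combination w5*hA + p5*hC
    rcases mul_eq_zero.mp hda with h | h
    · exact absurd h hdne
    · exact h
  exact ⟨ha0, ha1, ha2, ha3, ha4, ha5⟩

lemma B_symm (x y : V6) : B x y = B y x := by simp only [B]; ring

lemma key (w p a : V6) (hww : B w w = -1) (hwp : B w p = 0) (hpp : B p p < 0)
    (haw : B a w = 0) (hap : B a p = 0) (haa : B a a = 0) : a = 0 := by
  simp only [B] at hww hwp hpp haw hap haa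
  obtain ⟨h0, h1, h2, h3, h4, h5⟩ := key' (w 0) (w 1) (w 2) (w 3) (w 4) (w 5)
    (p 0) (p 1) (p 2) (p 3) (p 4) (p 5) (a 0) (a 1) (a 2) (a 3) (a 4) (a 5)
    hww hwp hpp haw hap haa
  funext i
  fin_cases i <;> simpa

lemma mem_span_triple {u v w x : V6} (h : x ∈ Submodule.span ℝ ({u, v, w} : Set V6)) :
    ∃ a b c : ℝ, x = a • u + b • v + c • w := by
  rw [Submodule.mem_span_insert] at h
  obtain ⟨a, z, hz, rfl⟩ := h
  rw [Submodule.mem_span_insert] at hz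
  obtain ⟨b, z', hz', rfl⟩ := hz
  rw [Submodule.mem_span_singleton] at hz'
  obtain ⟨c, rfl⟩ := hz'
  exact ⟨a, b, c, (add_assoc _ _ _).symm⟩

lemma sig21_finrank_le {D : Submodule ℝ V6} (h : IsSig21 D) : Module.finrank ℝ D ≤ 3 := by
  classical
  obtain ⟨u, v, w, rfl, -⟩ := h
  have hsub : ({u, v, w} : Set V6) = (({u, v, w} : Finset V6) : Set V6) := by simp
  rw [hsub]
  calc Module.finrank ℝ (Submodule.span ℝ (({u, v, w} : Finset V6) : Set V6))
      ≤ ({u, v, w} : Finset V6).card := finrank_span_finset_le_card _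
    _ ≤ 3 := by
        apply le_trans (Finset.card_insert_le _ _)
        have := Finset.card_insert_le v ({w} : Finset V6)
        simp at this ⊢
        omega

lemma dupin_inf_bot {D E : Submodule ℝ V6} (h : IsDupin D E) : D ⊓ E = ⊥ := by
  obtain ⟨⟨u, v, w, hD, huu, hvv, hww, huv, huw, hvw⟩, -, hE⟩ := h
  rw [eq_bot_iff]
  rintro x ⟨hxD, hxE⟩
  have hu : u ∈ D := hD ▸ Submodule.subset_span (by simp)
  have hv : v ∈ D := hD ▸ Submodule.subset_span (by simp)
  have hw : w ∈ D := hD ▸ Submodule.subset_span (by simp)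
  obtain ⟨a, b, c, rfl⟩ := mem_span_triple (hD ▸ hxD)
  have h1 := (hE _).mp hxE u hu
  have h2 := (hE _).mp hxE v hv
  have h3 := (hE _).mp hxE w hw
  simp only [B, Pi.add_apply, Pi.smul_apply, smul_eq_mul] at h1 h2 h3 huu hvv hww huv huw hvw
  have ha : a = 0 := by linear_combination h1 - a*huu - b*(by linear_combination huv : v 0*u 0+v 1*u 1+v 2*u 2+v 3*u 3-v 4*u 4-v 5*u 5 = 0) - c*(by linear_combination huw : w 0*u 0+w 1*u 1+w 2*u 2+w 3*u 3-w 4*u 4-w 5*u 5 = 0)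
  have hb : b = 0 := by linear_combination h2 - a*huv - b*hvv - c*(by linear_combination hvw : w 0*v 0+w 1*v 1+w 2*v 2+w 3*v 3-w 4*v 4-w 5*v 5 = 0)
  have hc : c = 0 := by linear_combination -h3 + a*huw + b*hvw + c*hww
  simp [ha, hb, hc]

lemma finrank_sup_le' (A C : Submodule ℝ V6) :
    Module.finrank ℝ ↥(A ⊔ C) ≤ Module.finrank ℝ A + Module.finrank ℝ C := by
  have := Submodule.finrank_sup_add_finrank_inf_eq A C
  omega

lemma span2 {S T F : Submodule ℝ V6} (hS : S ≤ F) (hT : T ≤ F)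
    (h1 : Module.finrank ℝ S = 1) (h2 : Module.finrank ℝ T = 1) (hne : S ≠ T)
    (hF : Module.finrank ℝ F = 2) : F = S ⊔ T := by
  have hle : Module.finrank ℝ ↥(S ⊓ T) ≤ 1 := h1 ▸ Submodule.finrank_mono inf_le_left
  have hinf0 : Module.finrank ℝ ↥(S ⊓ T) = 0 := by
    by_contra h
    have e1 : S ⊓ T = S := Submodule.eq_of_le_of_finrank_le inf_le_left (by omega)
    have e2 : S ⊓ T = T := Submodule.eq_of_le_of_finrank_le inf_le_right (by omega)
    exact hne (e1 ▸ e2)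
  have hsup : Module.finrank ℝ ↥(S ⊔ T) = 2 := by
    have := Submodule.finrank_sup_add_finrank_inf_eq S T
    omega
  exact (Submodule.eq_of_le_of_finrank_le (sup_le hS hT) (by omega)).symm

lemma reduce {Dn En S T F X : Submodule ℝ V6} (hbot : Dn ⊓ En = ⊥) (hF : F = S ⊔ T)
    (hSD : S ≤ Dn) (hTE : T ≤ En) (hXF : X ≤ F) (hXD : X ≤ Dn) : X ≤ S := by
  intro x hx
  have hxF : x ∈ S ⊔ T := hF ▸ hXF hx
  obtain ⟨u, hu, v, hv, rfl⟩ := Submodule.mem_sup.mp hxF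
  have hvD : v ∈ Dn := by
    have : (u + v) - u ∈ Dn := Submodule.sub_mem _ (hXD hx) (hSD hu)
    simpa using this
  have : v ∈ Dn ⊓ En := ⟨hvD, hTE hv⟩
  rw [hbot] at this
  simp only [Submodule.mem_bot] at this
  simpa [this] using hu


/-- For a nondegenerate discrete channel surface with circular direction `+`
and any point sphere complex `p`, two adjacent circular curvature lines lie on a common
sphere: there is a subspace `W ≤ p^⊥` of dimension at most 4 containing the point spheres of
`f(m,n)` and `f(m,n+1)` for all `m` (a face-sphere of the discrete channel surface). -/
theorem face_spheres_exist
    (f : ℤ × ℤ → Submodule ℝ V6) (hf : IsChannelPlus f) (hnd : Nondeg f)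
    (p : V6) (hp : B p p < 0) :
    ∀ n : ℤ, ∃ W : Submodule ℝ V6, W ≤ pPerp p ∧ Module.finrank ℝ W ≤ 4 ∧
      ∀ m : ℤ, f (m, n) ⊓ pPerp p ≤ W ∧ f (m, n + 1) ⊓ pPerp p ≤ W := by
  obtain ⟨⟨hContact, hSp, hSm⟩, D, E, hFC, hInd⟩ := hf
  intro n
  have hD : ∀ m : ℤ, D (m, n) = D (0, n) := fun m => (hInd m 0 n).1
  have hE : ∀ m : ℤ, E (m, n) = E (0, n) := fun m => (hInd m 0 n).2
  have c1 : ∀ m : ℤ, sPlus f m n ≤ D (0, n) := fun m => by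
    rw [← hD m]; exact (hFC m n).2.1
  have c2 : ∀ m : ℤ, sPlus f m (n+1) ≤ D (0, n) := fun m => by
    rw [← hD m]; exact (hFC m n).2.2.1
  have c3 : ∀ m : ℤ, sMinus f m n ≤ E (0, n) := fun m => by
    rw [← hE m]; exact (hFC m n).2.2.2.1
  have hDup : IsDupin (D (0, n)) (E (0, n)) := (hFC 0 n).1
  have hbot : D (0, n) ⊓ E (0, n) = ⊥ := dupin_inf_bot hDup
  have hfr : ∀ m : ℤ, f (m, n) = sPlus f m n ⊔ sMinus f m n := fun m =>
    span2 inf_le_left inf_le_left (hSp m n) (hSm m n) (hnd m n).1 (hContact (m, n)).1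
  have hfr' : ∀ m : ℤ, f (m, n+1) = sPlus f m (n+1) ⊔ sMinus f m n := fun m =>
    span2 inf_le_left inf_le_right (hSp m (n+1)) (hSm m n) (hnd m n).2 (hContact (m, n+1)).1
  have step : ∀ m : ℤ, sPlus f m n = sPlus f (m+1) n := by
    intro m
    have hle : sPlus f m n ≤ sPlus f (m+1) n :=
      reduce hbot (hfr (m+1)) (c1 (m+1)) (c3 (m+1)) inf_le_right (c1 m)
    exact Submodule.eq_of_le_of_finrank_le hle
      (by rw [hSp (m+1) n, hSp m n])
  have step' : ∀ m : ℤ, sPlus f m (n+1) = sPlus f (m+1) (n+1) := by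
    intro m
    have hle : sPlus f m (n+1) ≤ sPlus f (m+1) (n+1) :=
      reduce hbot (hfr' (m+1)) (c2 (m+1)) (c3 (m+1)) inf_le_right (c2 m)
    exact Submodule.eq_of_le_of_finrank_le hle
      (by rw [hSp (m+1) (n+1), hSp m (n+1)])
  have const : ∀ m : ℤ, sPlus f m n = sPlus f 0 n := by
    intro m
    induction m using Int.induction_on with
    | zero => rfl
    | succ k ih => rw [← step k]; exact ih
    | pred k ih =>
        have h := step (-(k : ℤ) - 1)
        rw [show (-(k : ℤ) - 1 + 1 : ℤ) = -k by ring] at h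
        rw [h]; exact ih
  have const' : ∀ m : ℤ, sPlus f m (n+1) = sPlus f 0 (n+1) := by
    intro m
    induction m using Int.induction_on with
    | zero => rfl
    | succ k ih => rw [← step' k]; exact ih
    | pred k ih =>
        have h := step' (-(k : ℤ) - 1)
        rw [show (-(k : ℤ) - 1 + 1 : ℤ) = -k by ring] at h
        rw [h]; exact ih
  have hEU : E (0, n) ≤ sPlus f 0 n ⊔ (sPlus f 0 (n+1) ⊔ E (0, n)) :=
    le_sup_right.trans le_sup_right
  have hfU : ∀ m : ℤ, f (m, n) ≤ sPlus f 0 n ⊔ (sPlus f 0 (n+1) ⊔ E (0, n)) := by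
    intro m
    rw [hfr m, const m]
    exact sup_le le_sup_left ((c3 m).trans hEU)
  have hfU' : ∀ m : ℤ, f (m, n+1) ≤ sPlus f 0 n ⊔ (sPlus f 0 (n+1) ⊔ E (0, n)) := by
    intro m
    rw [hfr' m, const' m]
    exact sup_le (le_sup_left.trans le_sup_right) ((c3 m).trans hEU)
  have hU5 : Module.finrank ℝ ↥(sPlus f 0 n ⊔ (sPlus f 0 (n+1) ⊔ E (0, n))) ≤ 5 := by
    have t1 := finrank_sup_le' (sPlus f 0 n) (sPlus f 0 (n+1) ⊔ E (0, n))
    have t2 := finrank_sup_le' (sPlus f 0 (n+1)) (E (0, n))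
    have t3 := sig21_finrank_le hDup.2.1
    have t4 := hSp 0 n
    have t5 := hSp 0 (n+1)
    omega
  by_cases hUP : sPlus f 0 n ⊔ (sPlus f 0 (n+1) ⊔ E (0, n)) ≤ pPerp p
  · exfalso
    have hSne : sPlus f 0 n ≠ ⊥ := by
      intro h
      have := hSp 0 n
      rw [h] at this
      simp at this
    obtain ⟨a, ha, hane⟩ := Submodule.ne_bot_iff _ |>.mp hSne
    have haf : a ∈ f (0, n) := (inf_le_left : sPlus f 0 n ≤ f (0, n)) ha
    have haa : B a a = 0 := (hContact (0, n)).2 a haf a haf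
    have hap : B a p = 0 := hUP ((le_sup_left :
      sPlus f 0 n ≤ sPlus f 0 n ⊔ (sPlus f 0 (n+1) ⊔ E (0, n))) ha)
    obtain ⟨u, v, w, hEspan, huu, hvv, hww, -, -, -⟩ := hDup.2.1
    have hwE : w ∈ E (0, n) := by
      rw [hEspan]; exact Submodule.subset_span (by simp)
    have hwp : B w p = 0 := hUP (hEU hwE)
    have haD : a ∈ D (0, n) := c1 0 ha
    have haw : B a w = 0 := by rw [B_symm]; exact (hDup.2.2 w).mp hwE a haD
    exact hane (key w p a hww hwp hp haw hap haa)
  · refine ⟨(sPlus f 0 n ⊔ (sPlus f 0 (n+1) ⊔ E (0, n))) ⊓ pPerp p, inf_le_right, ?_, ?_⟩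
    · have hlt : (sPlus f 0 n ⊔ (sPlus f 0 (n+1) ⊔ E (0, n))) ⊓ pPerp p
          < sPlus f 0 n ⊔ (sPlus f 0 (n+1) ⊔ E (0, n)) := by
        refine lt_of_le_of_ne inf_le_left (fun h => hUP ?_)
        rw [← h]; exact inf_le_right
      have := Submodule.finrank_lt_finrank_of_lt hlt
      omega
    · intro m
      exact ⟨inf_le_inf (hfU m) le_rfl, inf_le_inf (hfU' m) le_rfl⟩
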